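/- Let f : ℕ → ℂ be multiplicative and satisfy f(x² − xy + y²) = f(x)² − f(x)f(y) + f(y)² for all positive integers x, y. If f(2) = 0, then f(2k) = 0 for all k ≥ 1 and f(2k+1) = 1 for all k ≥ 0; i.e., f = f_2. -/
import Mathlib


theorem stmt_16 (f : ℕ → ℂ) (h1 : f 1 = 1)
    (hmul : ∀ m n : ℕ, Nat.gcd m n = 1 → f (m * n) = f m * f n)
    (hfe : ∀ x y : ℕ, 0 < x → 0 < y →
      f (x ^ 2 + y ^ 2 - x * y) = f x ^ 2 - f x * f y + f y ^ 2)
    (h2 : f 2 = 0) :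
    (∀ k : ℕ, 1 ≤ k → f (2 * k) = 0) ∧ (∀ k : ℕ, f (2 * k + 1) = 1) := by
  have h4 : f 4 = 0 := by
    have h := hfe 2 2 (by norm_num) (by norm_num)
    norm_num [h2] at h
    exact h
  have heven : ∀ k : ℕ, 1 ≤ k → f (2 * k) = 0 := by
    intro k hk
    have hle2 : k ≤ k ^ 2 := by nlinarith
    have hev : Even (k ^ 2 - k) := by
      rw [Nat.even_sub hle2]
      simp [Nat.even_pow]
    have hoddn : Odd (k ^ 2 - k + 1) := hev.add_one
    have hcop : Nat.gcd 4 (k ^ 2 - k + 1) = 1 := by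
      have h2c : Nat.Coprime 2 (k ^ 2 - k + 1) := Nat.coprime_two_left.mpr hoddn
      have : Nat.Coprime (2 ^ 2) (k ^ 2 - k + 1) := h2c.pow_left 2
      simpa using this
    have hfmul := hmul 4 (k ^ 2 - k + 1) hcop
    have hodd : f (k ^ 2 - k + 1) = f (k ^ 2 - k + 1) := rfl
    have h := hfe 2 (2 * k) (by norm_num) (by omega)
    have hle : 2 * (2 * k) ≤ 2 ^ 2 + (2 * k) ^ 2 := by nlinarith
    have harg : 2 ^ 2 + (2 * k) ^ 2 - 2 * (2 * k) = 4 * (k ^ 2 - k + 1) := by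
      zify [hle, hle2]; ring
    rw [harg, hfmul, h4, h2] at h
    have hsq : f (2 * k) ^ 2 = 0 := by linear_combination -h
    exact pow_eq_zero_iff (n := 2) (by norm_num) |>.mp hsq
  refine ⟨heven, ?_⟩
  intro k
  cases k with
  | zero => simpa using h1
  | succ n =>
    set k := n + 1 with hkdef
    have hk : 1 ≤ k := by omega
    have ha := hfe (2 * k + 1) 1 (by omega) (by norm_num)
    have hb := hfe (2 * k + 1) (2 * k) (by omega) (by omega)
    have harga : (2 * k + 1) ^ 2 + 1 ^ 2 - (2 * k + 1) * 1 = 4 * k ^ 2 + 2 * k + 1 := by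
      have : (2 * k + 1) * 1 ≤ (2 * k + 1) ^ 2 + 1 ^ 2 := by nlinarith
      zify [this]; ring
    have hargb : (2 * k + 1) ^ 2 + (2 * k) ^ 2 - (2 * k + 1) * (2 * k) = 4 * k ^ 2 + 2 * k + 1 := by
      have : (2 * k + 1) * (2 * k) ≤ (2 * k + 1) ^ 2 + (2 * k) ^ 2 := by nlinarith
      zify [this]; ring
    rw [harga, h1] at ha
    rw [hargb, heven k hk] at hb
    have := ha.symm.trans hb
    linear_combination -this
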